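/- arXiv:2301.10598 — 3 statements merged into one kernel-verified Lean document; each statement's English description precedes it below -/
import Mathlib

section
/- For persistence modules F, G over ℝ, d_isom(F,G) ≤ 2 · d_w(F,G). More precisely, if (F,G) is weakly (a,b)-isomorphic, then (F,G) is (a+b, a+b)-isomorphic. -/
open CategoryTheory

/-- A persistence module over `ℝ`: a functor from `(ℝ, ≤)` to `k`-vector spaces. -/
abbrev PersMod (k : Type) [Field k] := ℝ ⥤ ModuleCat k

variable {k : Type} [Field k]

/-- A degree-`a` morphism of persistence modules, i.e. a morphism `F ⟶ T_a G`:
its component at `t` is a map `F(t) ⟶ G(t + a)`, naturally in `t`. -/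
structure ShiftHom (F G : PersMod k) (a : ℝ) where
  app : ∀ t : ℝ, F.obj t ⟶ G.obj (t + a)
  nat : ∀ (s t : ℝ) (h : s ≤ t),
    F.map (homOfLE h) ≫ app t = app s ≫ G.map (homOfLE (by linarith : s + a ≤ t + a))

/-- `(F, G)` is `(a,b)`-isomorphic: there are `α : F ⟶ T_a G`, `β : G ⟶ T_b F` with
`T_a β ∘ α = τ_{0,a+b}(F)` and `T_b α ∘ β = τ_{0,a+b}(G)`. -/
def IsIsomPair (F G : PersMod k) (a b : ℝ) : Prop :=
  ∃ (ha : 0 ≤ a) (hb : 0 ≤ b) (α : ShiftHom F G a) (β : ShiftHom G F b),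
    (∀ t : ℝ, α.app t ≫ β.app (t + a) = F.map (homOfLE (by linarith : t ≤ t + a + b))) ∧
    (∀ t : ℝ, β.app t ≫ α.app (t + b) = G.map (homOfLE (by linarith : t ≤ t + b + a)))

/-- `(F, G)` is weakly `(a,b)`-isomorphic. -/
def IsWeakIsomPair (F G : PersMod k) (a b : ℝ) : Prop :=
  ∃ (ha : 0 ≤ a) (hb : 0 ≤ b) (α δ : ShiftHom F G a) (β γ : ShiftHom G F b),
    (∀ t : ℝ, α.app t ≫ β.app (t + a) = F.map (homOfLE (by linarith : t ≤ t + a + b))) ∧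
    (∀ t : ℝ, γ.app t ≫ δ.app (t + b) = G.map (homOfLE (by linarith : t ≤ t + b + a))) ∧
    (∀ t : ℝ, α.app t ≫ G.map (homOfLE (by linarith : t + a ≤ t + a + a)) =
      δ.app t ≫ G.map (homOfLE (by linarith : t + a ≤ t + a + a))) ∧
    (∀ t : ℝ, β.app t ≫ F.map (homOfLE (by linarith : t + b ≤ t + b + b)) =
      γ.app t ≫ F.map (homOfLE (by linarith : t + b ≤ t + b + b)))

/-- `(F, G)` is `(a,b)`-interleaved. -/
def IsInterleavedPair (F G : PersMod k) (a b : ℝ) : Prop :=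
  ∃ (ha : 0 ≤ a) (hb : 0 ≤ b) (α δ : ShiftHom F G a) (β γ : ShiftHom G F b),
    (∀ t : ℝ, α.app t ≫ β.app (t + a) = F.map (homOfLE (by linarith : t ≤ t + a + b))) ∧
    (∀ t : ℝ, γ.app t ≫ δ.app (t + b) = G.map (homOfLE (by linarith : t ≤ t + b + a)))

open ENNReal in
noncomputable def dIsom (F G : PersMod k) : ℝ≥0∞ :=
  sInf { c | ∃ a b : ℝ, IsIsomPair F G a b ∧ c = ENNReal.ofReal (a + b) }

open ENNReal in
noncomputable def dWIsom (F G : PersMod k) : ℝ≥0∞ :=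
  sInf { c | ∃ a b : ℝ, IsWeakIsomPair F G a b ∧ c = ENNReal.ofReal (a + b) }

open ENNReal in
noncomputable def dInt (F G : PersMod k) : ℝ≥0∞ :=
  sInf { c | ∃ a b : ℝ, IsInterleavedPair F G a b ∧ c = ENNReal.ofReal (a + b) }

/-- The canonical morphism `τ_{0,c}(F) : F ⟶ T_c F` as a degree-`c` morphism. -/
def tauHom (F : PersMod k) (c : ℝ) (hc : 0 ≤ c) : ShiftHom F F c where
  app t := F.map (homOfLE (by linarith : t ≤ t + c))
  nat s t h := by
    rw [← Functor.map_comp, ← Functor.map_comp]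
    congr 1

/-- Postcomposition with `τ_{c,c'}(F)`. -/
def tauComp (F : PersMod k) {c c' : ℝ} (h : c ≤ c') (u : ShiftHom F F c) :
    ShiftHom F F c' where
  app t := u.app t ≫ F.map (homOfLE (by linarith : t + c ≤ t + c'))
  nat s t hst := by
    rw [← Category.assoc, u.nat s t hst, Category.assoc, ← Functor.map_comp,
      Category.assoc, ← Functor.map_comp]
    congr 2

/-- Composition of shifted morphisms. -/
def ShiftHom.comp {F G H : PersMod k} {a b : ℝ} (u : ShiftHom F G a) (v : ShiftHom G H b) :
    ShiftHom F H (a + b) where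
  app t := u.app t ≫ v.app (t + a) ≫ H.map (eqToHom (add_assoc t a b))
  nat s t h := by
    rw [← Category.assoc, u.nat s t h, Category.assoc,
      ← Category.assoc _ (v.app (t + a)) _, v.nat (s + a) (t + a) (by linarith)]
    simp only [Category.assoc, ← Functor.map_comp]
    congr 3

lemma weak_to_isom (F G : PersMod k) (a b : ℝ) :
    IsWeakIsomPair F G a b → IsIsomPair F G (a + b) (a + b) := by
  rintro ⟨ha, hb, α, δ, β, γ, h1, h2, h3, h4⟩
  refine ⟨by linarith, by linarith,
    ⟨fun t => α.app t ≫ G.map (homOfLE (by linarith : t + a ≤ t + (a + b))), ?_⟩,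
    ⟨fun t => β.app t ≫ F.map (homOfLE (by linarith : t + b ≤ t + (a + b))), ?_⟩,
    ?_, ?_⟩
  · intro s t h
    rw [← Category.assoc, α.nat s t h]
    simp only [Category.assoc, ← Functor.map_comp]
    congr 2
  · intro s t h
    rw [← Category.assoc, β.nat s t h]
    simp only [Category.assoc, ← Functor.map_comp]
    congr 2
  · intro t
    -- α.app t ≫ G.map ≫ β.app (t+(a+b)) ≫ F.map = full F map
    rw [Category.assoc, ← Category.assoc (G.map _),
      β.nat (t + a) (t + (a + b)) (by linarith)]
    simp only [← Category.assoc]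
    rw [h1 t]
    simp only [Category.assoc, ← Functor.map_comp]
    congr 1
  · intro t
    -- β.app t ≫ F.map ≫ α.app (t+(a+b)) ≫ G.map = full G map
    rw [Category.assoc, ← Category.assoc (F.map _),
      α.nat (t + b) (t + (a + b)) (by linarith)]
    -- now : β.app t ≫ α.app (t+b) ≫ G.map (t+b+a ≤ t+(a+b)+a) ≫ G.map (... ≤ t+(a+b)+(a+b))
    have split1 : (G.map (homOfLE (by linarith : t + b + a ≤ t + (a + b) + a)) ≫
        G.map (homOfLE (by linarith : t + (a + b) + a ≤ t + (a + b) + (a + b)))) =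
        G.map (homOfLE (by linarith : t + b + a ≤ t + b + a + a)) ≫
        G.map (homOfLE (by linarith : t + b + a + a ≤ t + (a + b) + (a + b))) := by
      simp only [← Functor.map_comp]; congr 1
    simp only [Category.assoc]
    rw [split1, ← Category.assoc (α.app (t + b)), h3 (t + b)]
    -- now use δ naturality to move δ past an F.map, to apply h4
    have split2 : (G.map (homOfLE (by linarith : t + b + a ≤ t + b + a + a)) ≫
        G.map (homOfLE (by linarith : t + b + a + a ≤ t + (a + b) + (a + b)))) =
        G.map (homOfLE (by linarith : t + b + a ≤ t + b + b + a)) ≫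
        G.map (homOfLE (by linarith : t + b + b + a ≤ t + (a + b) + (a + b))) := by
      simp only [← Functor.map_comp]; congr 1
    simp only [Category.assoc]
    rw [split2, ← Category.assoc (δ.app (t + b)),
      ← δ.nat (t + b) (t + b + b) (by linarith)]
    simp only [← Category.assoc]
    rw [h4 t]
    simp only [Category.assoc]
    rw [← Category.assoc (F.map _) (δ.app _), δ.nat (t + b) (t + b + b) (by linarith)]
    simp only [← Category.assoc]
    rw [h2 t]
    simp only [← Functor.map_comp]
    congr 1

theorem dIsom_le_two_mul_dWIsom (F G : PersMod k) (a b : ℝ) :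
    (IsWeakIsomPair F G a b → IsIsomPair F G (a + b) (a + b)) ∧
    dIsom F G ≤ 2 * dWIsom F G := by
  refine ⟨weak_to_isom F G a b, ?_⟩
  rw [dWIsom, dIsom]
  conv_rhs => rw [sInf_eq_iInf', ENNReal.mul_iInf_of_ne two_ne_zero ENNReal.ofNat_ne_top]
  apply le_iInf
  rintro ⟨c, a', b', hw, rfl⟩
  apply sInf_le
  obtain ⟨ha', hb', -⟩ := id hw
  refine ⟨a' + b', a' + b', weak_to_isom F G a' b' hw, ?_⟩
  rw [two_mul, ← ENNReal.ofReal_add (by linarith) (by linarith)]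
end

section
/- Triangle inequality for d_isom: if (F,G) is (a,b)-isomorphic and (G,H) is (a',b')-isomorphic, then (F,H) is (a+a', b+b')-isomorphic; consequently d_isom(F,H) ≤ d_isom(F,G) + d_isom(G,H) for persistence modules F, G, H over ℝ. -/
open CategoryTheory

variable {k : Type} [Field k]

/-- Transport a shifted morphism along an equality of degrees. -/
def ShiftHom.cast {F G : PersMod k} {a a' : ℝ} (h : a = a') (u : ShiftHom F G a) :
    ShiftHom F G a' where
  app t := u.app t ≫ G.map (eqToHom (by rw [h]))
  nat s t hst := by
    subst h
    simpa using u.nat s t hst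

lemma eqToHom_eq_homOfLE {s t : ℝ} (h : s = t) : eqToHom h = homOfLE h.le :=
  Subsingleton.elim _ _

lemma map_homOfLE_comp (F : PersMod k) {s t u : ℝ} (h1 : s ≤ t) (h2 : t ≤ u) :
    F.map (homOfLE h1) ≫ F.map (homOfLE h2) = F.map (homOfLE (h1.trans h2)) := by
  rw [← F.map_comp]; congr 1

lemma map_homOfLE_comp_assoc (F : PersMod k) {s t u : ℝ} (h1 : s ≤ t) (h2 : t ≤ u)
    {Z : ModuleCat k} (f : F.obj u ⟶ Z) :
    F.map (homOfLE h1) ≫ F.map (homOfLE h2) ≫ f = F.map (homOfLE (h1.trans h2)) ≫ f := by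
  rw [← Category.assoc, map_homOfLE_comp]

lemma isIsomPair_comp {F G H : PersMod k} {a b a' b' : ℝ}
    (hFG : IsIsomPair F G a b) (hGH : IsIsomPair G H a' b') :
    IsIsomPair F H (a + a') (b + b') := by
  obtain ⟨ha, hb, α, β, h1, h2⟩ := hFG
  obtain ⟨ha', hb', α', β', h1', h2'⟩ := hGH
  refine ⟨by linarith, by linarith, α.comp α', (β'.comp β).cast (add_comm b' b), ?_, ?_⟩
  · intro t
    show (α.app t ≫ α'.app (t + a) ≫ H.map (eqToHom _)) ≫
      ((β'.app (t + (a + a')) ≫ β.app (t + (a + a') + b') ≫ F.map (eqToHom _)) ≫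
        F.map (eqToHom _)) = _
    simp only [eqToHom_eq_homOfLE, Category.assoc]
    rw [reassoc_of% β'.nat (t + a + a') (t + (a + a')) (by linarith),
      reassoc_of% β.nat (t + a + a' + b') (t + (a + a') + b') (by linarith),
      reassoc_of% h1' (t + a),
      reassoc_of% β.nat (t + a) (t + a + a' + b') (by linarith),
      reassoc_of% h1 t]
    simp only [map_homOfLE_comp]
  · intro t
    show ((β'.app t ≫ β.app (t + b') ≫ F.map (eqToHom _)) ≫ F.map (eqToHom _)) ≫
      (α.app (t + (b + b')) ≫ α'.app (t + (b + b') + a) ≫ H.map (eqToHom _)) = _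
    simp only [eqToHom_eq_homOfLE, Category.assoc]
    simp only [map_homOfLE_comp_assoc]
    rw [reassoc_of% α.nat (t + b' + b) (t + (b + b')) (by linarith),
      reassoc_of% α'.nat (t + b' + b + a) (t + (b + b') + a) (by linarith),
      reassoc_of% h2 (t + b'),
      reassoc_of% α'.nat (t + b') (t + b' + b + a) (by linarith),
      reassoc_of% h2' t]
    simp only [map_homOfLE_comp]

theorem dIsom_triangle (F G H : PersMod k) (a b a' b' : ℝ) :
    (IsIsomPair F G a b → IsIsomPair G H a' b' → IsIsomPair F H (a + a') (b + b')) ∧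
    dIsom F H ≤ dIsom F G + dIsom G H := by
  refine ⟨isIsomPair_comp, ?_⟩
  rw [dIsom, dIsom, dIsom, ENNReal.sInf_add]
  refine le_iInf₂ fun x hx => ?_
  rw [add_comm, ENNReal.sInf_add]
  refine le_iInf₂ fun y hy => ?_
  obtain ⟨p, q, hpq, rfl⟩ := hx
  obtain ⟨p', q', hpq', rfl⟩ := hy
  obtain ⟨hp, hq, -⟩ := id hpq
  obtain ⟨hp', hq', -⟩ := id hpq'
  calc sInf {c | ∃ a b : ℝ, IsIsomPair F H a b ∧ c = ENNReal.ofReal (a + b)}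
      ≤ ENNReal.ofReal ((p + p') + (q + q')) :=
        sInf_le ⟨p + p', q + q', isIsomPair_comp hpq hpq', rfl⟩
    _ = ENNReal.ofReal (p' + q') + ENNReal.ofReal (p + q) := by
        rw [← ENNReal.ofReal_add (by linarith) (by linarith)]
        ring_nf
end

section
/- Let F, G be persistence modules over ℝ such that for every d ≥ 0 the k-vector space Hom(G, T_d G) is one-dimensional, spanned by τ_{0,d}(G), and suppose τ_{0,d}(G) ≠ 0 for all d ≥ 0 (equivalently, the canonical map Hom(G, T_d G) → colim_{c→∞} Hom(G, T_c G) is injective for each d ≥ 0). If (F,G) is weakly (a,b)-isomorphic, then (F,G) is (a,b)-isomorphic. Consequently, d_isom(F,G) = d_w(F,G) for such pairs. -/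
open CategoryTheory

variable {k : Type} [Field k]

section Aux

variable {k : Type} [Field k]

lemma map2 (G : PersMod k) {s t u : ℝ} (h1 : s ≤ t) (h2 : t ≤ u) :
    G.map (homOfLE h1) ≫ G.map (homOfLE h2) = G.map (homOfLE (h1.trans h2)) := by
  rw [← G.map_comp]; congr 1

lemma map_ne_congr (G : PersMod k) {t s s' : ℝ} (h : s = s') (h1 : t ≤ s) (h2 : t ≤ s') :
    G.map (homOfLE h1) ≠ 0 → G.map (homOfLE h2) ≠ 0 := by
  subst h; exact fun hn => hn

end Aux

theorem isomPair_of_weakIsomPair_of_endo_one_dim (F G : PersMod k)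
    (hspan : ∀ d : ℝ, ∀ hd : 0 ≤ d, ∀ u : ShiftHom G G d, ∃ r : k,
      ∀ t : ℝ, u.app t = r • G.map (homOfLE (by linarith : t ≤ t + d)))
    (hne : ∀ d : ℝ, ∀ hd : 0 ≤ d, ∃ t : ℝ,
      G.map (homOfLE (by linarith : t ≤ t + d)) ≠ 0) :
    (∀ a b : ℝ, IsWeakIsomPair F G a b → IsIsomPair F G a b) ∧
    dIsom F G = dWIsom F G := by

  have main : ∀ a b : ℝ, IsWeakIsomPair F G a b → IsIsomPair F G a b := by
    intro a b hw
    obtain ⟨ha, hb, α, δ, β, γ, h1, h2, h3, h4⟩ := hw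
    obtain ⟨r, hr⟩ := hspan (b + a) (by linarith) (β.comp α)
    have key : ∀ t : ℝ, β.app t ≫ α.app (t + b) =
        r • G.map (homOfLE (show t ≤ t + b + a by linarith)) := by
      intro t
      have h := hr t
      simp only [ShiftHom.comp] at h
      have h' := congrArg (fun f => f ≫ G.map (eqToHom (add_assoc t b a).symm)) h
      simp only [Category.assoc, ← G.map_comp, eqToHom_trans, eqToHom_refl,
        G.map_id, Category.comp_id, Linear.smul_comp] at h'
      rw [h']
      congr 1
    have hmap : ∀ t : ℝ, G.map (homOfLE (show t ≤ t + b + a + a + b by linarith)) =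
        r • G.map (homOfLE (show t ≤ t + b + a + a + b by linarith)) := by
      intro t
      have e5 := α.nat (t + b) (t + b + b) (by linarith)
      calc G.map (homOfLE (show t ≤ t + b + a + a + b by linarith))
          = (γ.app t ≫ δ.app (t + b)) ≫
              G.map (homOfLE (show t + b + a ≤ t + b + a + a + b by linarith)) := by
            rw [h2 t, map2]
        _ = γ.app t ≫ (δ.app (t + b) ≫
              G.map (homOfLE (show t + b + a ≤ t + b + a + a by linarith))) ≫
              G.map (homOfLE (show t + b + a + a ≤ t + b + a + a + b by linarith)) := by
            simp only [Category.assoc, map2]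
        _ = γ.app t ≫ (α.app (t + b) ≫
              G.map (homOfLE (show t + b + a ≤ t + b + a + a by linarith))) ≫
              G.map (homOfLE (show t + b + a + a ≤ t + b + a + a + b by linarith)) := by
            rw [← h3 (t + b)]
        _ = (γ.app t ≫ F.map (homOfLE (show t + b ≤ t + b + b by linarith))) ≫
              α.app (t + b + b) ≫
              G.map (homOfLE (show t + b + b + a ≤ t + b + a + a + b by linarith)) := by
            simp only [Category.assoc, map2]
            rw [← map2 G (show t + b + a ≤ t + b + b + a by linarith)
              (show t + b + b + a ≤ t + b + a + a + b by linarith),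
              ← Category.assoc (α.app (t + b)), ← e5]
            simp only [Category.assoc]
        _ = (β.app t ≫ F.map (homOfLE (show t + b ≤ t + b + b by linarith))) ≫
              α.app (t + b + b) ≫
              G.map (homOfLE (show t + b + b + a ≤ t + b + a + a + b by linarith)) := by
            rw [← h4 t]
        _ = β.app t ≫ α.app (t + b) ≫
              G.map (homOfLE (show t + b + a ≤ t + b + a + a + b by linarith)) := by
            simp only [Category.assoc]
            rw [← Category.assoc (F.map _), e5]
            simp only [Category.assoc, map2]
        _ = r • G.map (homOfLE (show t ≤ t + b + a + a + b by linarith)) := by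
            rw [← Category.assoc, key t, Linear.smul_comp, map2]
    have hr1 : r = 1 := by
      obtain ⟨t0, ht0⟩ := hne (b + a + a + b) (by linarith)
      have hne' : G.map (homOfLE (show t0 ≤ t0 + b + a + a + b by linarith)) ≠ 0 :=
        map_ne_congr G (by ring) _ _ ht0
      by_contra hr1
      have := hmap t0
      have hz : (1 - r) • G.map (homOfLE (show t0 ≤ t0 + b + a + a + b by linarith)) = 0 := by
        rw [sub_smul, one_smul, sub_eq_zero]
        exact this
      rcases smul_eq_zero.mp hz with h | h
      · exact hr1 (by linear_combination -h)
      · exact hne' h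
    refine ⟨ha, hb, α, β, h1, fun t => ?_⟩
    rw [key t, hr1, one_smul]
  refine ⟨main, ?_⟩
  unfold dIsom dWIsom
  congr 1
  ext c
  constructor
  · rintro ⟨a, b, ⟨ha, hb, α, β, p, q⟩, rfl⟩
    exact ⟨a, b, ⟨ha, hb, α, α, β, β, p, q, fun t => rfl, fun t => rfl⟩, rfl⟩
  · rintro ⟨a, b, hw, rfl⟩
    exact ⟨a, b, main a b hw, rfl⟩
end
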